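/- Let A ⊆ ℝ² and let H : ℝ → (0,1] be a continuous function. Define, for t ∈ ℝ, the local parabolic Hausdorff dimension d(t) := lim_{ρ→0⁺} dimH(A ∩ ((t−ρ, t+ρ) × ℝ); ϱ_{H(t)}) (the limit exists by monotonicity in ρ). Then d is upper semi-continuous: for every t ∈ ℝ, limsup_{s→t} d(s) ≤ d(t). -/

import Mathlib

open Filter MeasureTheory Set Topology
open scoped ENNReal NNReal

/-- The parabolic metric `ϱ_H((u,x),(v,y)) = max(|u−v|^H, |x−y|)` on `ℝ²`. -/
noncomputable def pDist (H : ℝ) (p q : ℝ × ℝ) : ℝ :=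
  max (|p.1 - q.1| ^ H) |p.2 - q.2|

/-- Diameter of a set with respect to the parabolic metric `ϱ_H` (in `ℝ≥0∞`). -/
noncomputable def pDiam (H : ℝ) (S : Set (ℝ × ℝ)) : ℝ≥0∞ :=
  ⨆ (p : ℝ × ℝ) (_ : p ∈ S) (q : ℝ × ℝ) (_ : q ∈ S), ENNReal.ofReal (pDist H p q)

/-- `A` is null for the `s`-dimensional Hausdorff measure in the parabolic metric `ϱ_H`:
for every `ε > 0` there is a countable cover of `A` by sets of `ϱ_H`-diameter at most `ε`
whose sum of `s`-th powers of diameters is less than `ε`. -/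
def pNull (H s : ℝ) (A : Set (ℝ × ℝ)) : Prop :=
  ∀ ε : ℝ, 0 < ε → ∃ U : ℕ → Set (ℝ × ℝ), A ⊆ ⋃ n, U n ∧
    (∀ n, pDiam H (U n) ≤ ENNReal.ofReal ε) ∧
    (∑' n, pDiam H (U n) ^ s) < ENNReal.ofReal ε

/-- The Hausdorff dimension of `A ⊆ ℝ²` computed in the parabolic metric `ϱ_H`:
the infimum of the nonnegative exponents `s` for which the `s`-dimensional parabolic
Hausdorff measure of `A` vanishes. -/
noncomputable def pDimH (H : ℝ) (A : Set (ℝ × ℝ)) : ℝ :=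
  sInf {s : ℝ | 0 ≤ s ∧ pNull H s A}

/-- The local parabolic Hausdorff dimension of `A` at `t`, with exponent `H t`:
`lim_{ρ→0⁺} dimH(A ∩ ((t−ρ,t+ρ) × ℝ); ϱ_{H(t)})`; since the inner quantity is nondecreasing
in `ρ`, the limit is the infimum over `ρ > 0`. -/
noncomputable def pDimLoc (H : ℝ → ℝ) (A : Set (ℝ × ℝ)) (t : ℝ) : ℝ :=
  sInf {x : ℝ | ∃ ρ > (0 : ℝ), x = pDimH (H t) (A ∩ (Ioo (t - ρ) (t + ρ) ×ˢ (univ : Set ℝ)))}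

lemma pDist_nonneg' (h : ℝ) (p q : ℝ × ℝ) : 0 ≤ pDist h p q :=
  le_trans (abs_nonneg _) (le_max_right _ _)

lemma pDiam_le' {h d : ℝ} {S : Set (ℝ × ℝ)} (hd : ∀ p ∈ S, ∀ q ∈ S, pDist h p q ≤ d) :
    pDiam h S ≤ ENNReal.ofReal d := by
  refine iSup₂_le fun p hp => iSup₂_le fun q hq => ?_
  exact ENNReal.ofReal_le_ofReal (hd p hp q hq)

lemma ofReal_pDist_le_pDiam {h : ℝ} {S : Set (ℝ × ℝ)} {p q : ℝ × ℝ}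
    (hp : p ∈ S) (hq : q ∈ S) : ENNReal.ofReal (pDist h p q) ≤ pDiam h S := by
  unfold pDiam
  exact le_iSup₂_of_le p hp (le_iSup₂_of_le q hq le_rfl)

lemma pDist_le_of_pDiam_le {h d : ℝ} (hd : 0 ≤ d) {S : Set (ℝ × ℝ)}
    (hS : pDiam h S ≤ ENNReal.ofReal d) {p q : ℝ × ℝ} (hp : p ∈ S) (hq : q ∈ S) :
    pDist h p q ≤ d :=
  (ENNReal.ofReal_le_ofReal_iff hd).mp ((ofReal_pDist_le_pDiam hp hq).trans hS)

lemma pDiam_empty' (h : ℝ) : pDiam h (∅ : Set (ℝ × ℝ)) = 0 := by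
  unfold pDiam; simp

lemma pNull_mono_set {h s : ℝ} {A B : Set (ℝ × ℝ)} (hAB : A ⊆ B) (hB : pNull h s B) :
    pNull h s A := by
  intro ε hε
  obtain ⟨U, hU1, hU2, hU3⟩ := hB ε hε
  exact ⟨U, hAB.trans hU1, hU2, hU3⟩

lemma pNull_ne_zero {h s : ℝ} {A : Set (ℝ × ℝ)} (hn : pNull h s A) : s ≠ 0 := by
  rintro rfl
  obtain ⟨U, -, -, h3⟩ := hn 1 one_pos
  simp only [ENNReal.rpow_zero] at h3
  rw [ENNReal.tsum_const_eq_top_of_ne_zero (by norm_num : (1:ℝ≥0∞) ≠ 0)] at h3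
  exact (not_top_lt h3)

lemma pDist_transfer {h h' : ℝ} (hh : 0 < h) (hh' : 0 < h') {p q : ℝ × ℝ}
    (hle : pDist h p q ≤ 1) :
    pDist h' p q ≤ (pDist h p q) ^ (1 / max (h / h') 1) := by
  set a := |p.1 - q.1| with ha
  set x := |p.2 - q.2| with hx
  have ha0 : 0 ≤ a := abs_nonneg _
  have hx0 : 0 ≤ x := abs_nonneg _
  have hM : pDist h p q = max (a ^ h) x := rfl
  have haM : a ^ h ≤ pDist h p q := le_max_left _ _
  have hxM : x ≤ pDist h p q := le_max_right _ _
  have hM0 : 0 ≤ pDist h p q := pDist_nonneg' h p q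
  have ha1 : a ≤ 1 := by
    by_contra hc
    push_neg at hc
    have : 1 < a ^ h := (Real.one_lt_rpow_iff ha0).mpr (Or.inl ⟨hc, hh⟩)
    linarith
  rcases le_total h h' with hc | hc
  · -- h ≤ h' : factor is 1
    have hmax : max (h / h') 1 = 1 := max_eq_right ((div_le_one hh').mpr hc)
    rw [hmax]
    norm_num
    refine max_le ?_ hxM
    rcases eq_or_lt_of_le ha0 with heq | hapos
    · rw [show |p.1 - q.1| = a from rfl, ← heq, Real.zero_rpow hh'.ne']
      exact hM0
    · exact le_trans (Real.rpow_le_rpow_of_exponent_ge hapos ha1 hc) haM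
  · -- h' ≤ h : factor is h/h'
    have h1c : 1 ≤ h / h' := (one_le_div hh').mpr hc
    have hmax : max (h / h') 1 = h / h' := max_eq_left h1c
    rw [hmax]
    have hee : 1 / (h / h') = h' / h := by field_simp
    rw [hee]
    have he0 : 0 ≤ h' / h := by positivity
    have he1 : h' / h ≤ 1 := (div_le_one hh).mpr hc
    rcases eq_or_lt_of_le hM0 with heq | hMpos
    · -- pDist h p q = 0
      have haz : a = 0 := by
        by_contra hne
        have : 0 < a ^ h := Real.rpow_pos_of_pos (lt_of_le_of_ne ha0 (Ne.symm hne)) h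
        linarith
      have hxz : x = 0 := le_antisymm (by linarith) hx0
      rw [← heq, Real.zero_rpow (by positivity : (h'/h : ℝ) ≠ 0)]
      unfold pDist
      rw [← ha, ← hx, haz, hxz, Real.zero_rpow hh'.ne']
      simp
    · have hM1 : pDist h p q ≤ 1 := hle
      refine max_le ?_ ?_
      · have : a ^ h' = (a ^ h) ^ (h' / h) := by
          rw [← Real.rpow_mul ha0]
          congr 1
          field_simp
        rw [this]
        exact Real.rpow_le_rpow (Real.rpow_nonneg ha0 h) haM he0
      · calc x ≤ pDist h p q := hxM
          _ = (pDist h p q) ^ (1 : ℝ) := (Real.rpow_one _).symm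
          _ ≤ (pDist h p q) ^ (h' / h) := Real.rpow_le_rpow_of_exponent_ge hMpos hM1 he1

lemma pDiam_transfer {h h' : ℝ} (hh : 0 < h) (hh' : 0 < h') {S : Set (ℝ × ℝ)}
    (hS : ∀ p ∈ S, ∀ q ∈ S, pDist h p q ≤ 1) :
    pDiam h' S ≤ (pDiam h S) ^ (1 / max (h / h') 1) := by
  have hcpos : (0:ℝ) < max (h / h') 1 := lt_of_lt_of_le one_pos (le_max_right _ _)
  refine iSup₂_le fun p hp => iSup₂_le fun q hq => ?_
  calc ENNReal.ofReal (pDist h' p q)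
      ≤ ENNReal.ofReal ((pDist h p q) ^ (1 / max (h / h') 1)) :=
        ENNReal.ofReal_le_ofReal (pDist_transfer hh hh' (hS p hp q hq))
    _ = (ENNReal.ofReal (pDist h p q)) ^ (1 / max (h / h') 1) :=
        (ENNReal.ofReal_rpow_of_nonneg (pDist_nonneg' h p q) (by positivity)).symm
    _ ≤ (pDiam h S) ^ (1 / max (h / h') 1) :=
        ENNReal.rpow_le_rpow (ofReal_pDist_le_pDiam hp hq) (by positivity)

lemma pNull_transfer {h h' s : ℝ} (hh : 0 < h) (hh' : 0 < h') (hs : 0 < s)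
    {A : Set (ℝ × ℝ)} (hA : pNull h s A) : pNull h' (s * max (h / h') 1) A := by
  intro ε hε
  set c := max (h / h') 1 with hcdef
  have hc1 : (1:ℝ) ≤ c := le_max_right _ _
  have hc : (0:ℝ) < c := lt_of_lt_of_le one_pos hc1
  have hεc : (0:ℝ) < ε ^ c := Real.rpow_pos_of_pos hε c
  set ε₀ := min (min ε (ε ^ c)) 1 with hε₀def
  have hε₀ : 0 < ε₀ := by positivity
  have hε₀1 : ε₀ ≤ 1 := min_le_right _ _
  have hε₀ε : ε₀ ≤ ε := le_trans (min_le_left _ _) (min_le_left _ _)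
  have hε₀εc : ε₀ ≤ ε ^ c := le_trans (min_le_left _ _) (min_le_right _ _)
  obtain ⟨U, hU1, hU2, hU3⟩ := hA ε₀ hε₀
  have hdist : ∀ n, ∀ p ∈ U n, ∀ q ∈ U n, pDist h p q ≤ 1 := fun n p hp q hq =>
    le_trans (pDist_le_of_pDiam_le hε₀.le (hU2 n) hp hq) hε₀1
  have hdiam : ∀ n, pDiam h' (U n) ≤ (pDiam h (U n)) ^ (1 / c) := fun n =>
    pDiam_transfer hh hh' (hdist n)
  refine ⟨U, hU1, fun n => ?_, ?_⟩
  · refine (hdiam n).trans ?_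
    calc (pDiam h (U n)) ^ (1 / c)
        ≤ (ENNReal.ofReal ε₀) ^ (1 / c) := ENNReal.rpow_le_rpow (hU2 n) (by positivity)
      _ = ENNReal.ofReal (ε₀ ^ (1 / c)) := ENNReal.ofReal_rpow_of_pos hε₀
      _ ≤ ENNReal.ofReal ε := by
          refine ENNReal.ofReal_le_ofReal ?_
          calc ε₀ ^ (1 / c) ≤ (ε ^ c) ^ (1 / c) :=
                Real.rpow_le_rpow hε₀.le hε₀εc (by positivity)
            _ = ε := by
                rw [← Real.rpow_mul hε.le]
                rw [mul_one_div, div_self hc.ne', Real.rpow_one]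
  · calc ∑' n, pDiam h' (U n) ^ (s * c)
        ≤ ∑' n, pDiam h (U n) ^ s := by
          refine ENNReal.tsum_le_tsum fun n => ?_
          calc pDiam h' (U n) ^ (s * c)
              ≤ ((pDiam h (U n)) ^ (1 / c)) ^ (s * c) :=
                ENNReal.rpow_le_rpow (hdiam n) (by positivity)
            _ = pDiam h (U n) ^ s := by
                rw [← ENNReal.rpow_mul]
                congr 1
                field_simp
      _ < ENNReal.ofReal ε₀ := hU3
      _ ≤ ENNReal.ofReal ε := ENNReal.ofReal_le_ofReal hε₀ε

/-! ### The covering lemma: every set is null for a large enough exponent -/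

noncomputable def pdel (ε : ℝ) (k : ℕ) : ℝ := ε * (1/2)^k / (2*(k:ℝ)+3)^2
noncomputable def pwid (h ε : ℝ) (k : ℕ) : ℝ := pdel ε k ^ (1/h)
noncomputable def pN (h ε : ℝ) (k : ℕ) : ℕ := ⌊(2*(k:ℝ)+2) / pwid h ε k⌋₊ + 1
noncomputable def pM (ε : ℝ) (k : ℕ) : ℕ := ⌊(2*(k:ℝ)+2) / pdel ε k⌋₊ + 1
noncomputable def pV (h ε : ℝ) (k i j : ℕ) : Set (ℝ × ℝ) :=
  if i < pN h ε k ∧ j < pM ε k then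
    Icc (-((k:ℝ)+1) + (i:ℝ) * pwid h ε k) (-((k:ℝ)+1) + ((i:ℝ)+1) * pwid h ε k) ×ˢ
      Icc (-((k:ℝ)+1) + (j:ℝ) * pdel ε k) (-((k:ℝ)+1) + ((j:ℝ)+1) * pdel ε k)
  else ∅

lemma pdel_pos {ε : ℝ} (hε : 0 < ε) (k : ℕ) : 0 < pdel ε k := by
  unfold pdel
  have : (0:ℝ) ≤ (k:ℝ) := Nat.cast_nonneg k
  positivity

lemma pdel_le {ε : ℝ} (hε : 0 < ε) (k : ℕ) : pdel ε k ≤ ε := by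
  unfold pdel
  have hK : (0:ℝ) ≤ (k:ℝ) := Nat.cast_nonneg k
  have hD : (1:ℝ) ≤ (2*(k:ℝ)+3)^2 := by nlinarith
  have hq : ((1:ℝ)/2)^k ≤ 1 := pow_le_one₀ (by norm_num) (by norm_num)
  have hq0 : (0:ℝ) < ((1:ℝ)/2)^k := by positivity
  rw [div_le_iff₀ (by positivity)]
  nlinarith

lemma pdel_le_one {ε : ℝ} (hε : 0 < ε) (hε4 : ε ≤ 1/4) (k : ℕ) : pdel ε k ≤ 1 :=
  le_trans (pdel_le hε k) (by linarith)

lemma pwid_pos {h ε : ℝ} (hε : 0 < ε) (k : ℕ) : 0 < pwid h ε k :=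
  Real.rpow_pos_of_pos (pdel_pos hε k) _

lemma pwid_le_one {h ε : ℝ} (hh : 0 < h) (hε : 0 < ε) (hε4 : ε ≤ 1/4) (k : ℕ) :
    pwid h ε k ≤ 1 :=
  Real.rpow_le_one (pdel_pos hε k).le (pdel_le_one hε hε4 k) (by positivity)

lemma pwid_rpow {h ε : ℝ} (hh : 0 < h) (hε : 0 < ε) (k : ℕ) :
    pwid h ε k ^ h = pdel ε k := by
  unfold pwid
  rw [← Real.rpow_mul (pdel_pos hε k).le, one_div_mul_cancel hh.ne', Real.rpow_one]

lemma pV_diam {h ε : ℝ} (hh : 0 < h) (hε : 0 < ε) (k i j : ℕ) :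
    pDiam h (pV h ε k i j) ≤ ENNReal.ofReal (pdel ε k) := by
  unfold pV
  split_ifs with hij
  · refine pDiam_le' fun p hp q hq => ?_
    simp only [Set.mem_prod, Set.mem_Icc] at hp hq
    obtain ⟨⟨hp11, hp12⟩, hp21, hp22⟩ := hp
    obtain ⟨⟨hq11, hq12⟩, hq21, hq22⟩ := hq
    have h1 : |p.1 - q.1| ≤ pwid h ε k := abs_sub_le_iff.mpr ⟨by linarith, by linarith⟩
    have h2 : |p.2 - q.2| ≤ pdel ε k := abs_sub_le_iff.mpr ⟨by linarith, by linarith⟩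
    refine max_le ?_ h2
    calc |p.1 - q.1| ^ h ≤ pwid h ε k ^ h :=
          Real.rpow_le_rpow (abs_nonneg _) h1 hh.le
      _ = pdel ε k := pwid_rpow hh hε k
  · rw [pDiam_empty']
    exact zero_le

lemma pN_le {h ε : ℝ} (hh : 0 < h) (hε : 0 < ε) (hε4 : ε ≤ 1/4) (k : ℕ) :
    (pN h ε k : ℝ) ≤ (2*(k:ℝ)+3) / pwid h ε k := by
  have hw0 := pwid_pos (h := h) hε k
  have hw1 := pwid_le_one hh hε hε4 k
  have hK : (0:ℝ) ≤ (k:ℝ) := Nat.cast_nonneg k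
  have h1 : (⌊(2*(k:ℝ)+2) / pwid h ε k⌋₊ : ℝ) ≤ (2*(k:ℝ)+2) / pwid h ε k :=
    Nat.floor_le (by positivity)
  have h2 : (1:ℝ) ≤ 1 / pwid h ε k := by rw [le_div_iff₀ hw0]; linarith
  have h3 : (2*(k:ℝ)+3) / pwid h ε k = (2*(k:ℝ)+2) / pwid h ε k + 1 / pwid h ε k := by
    ring
  unfold pN
  push_cast
  linarith

lemma pM_le {ε : ℝ} (hε : 0 < ε) (hε4 : ε ≤ 1/4) (k : ℕ) :
    (pM ε k : ℝ) ≤ (2*(k:ℝ)+3) / pdel ε k := by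
  have hw0 := pdel_pos hε k
  have hw1 := pdel_le_one hε hε4 k
  have hK : (0:ℝ) ≤ (k:ℝ) := Nat.cast_nonneg k
  have h1 : (⌊(2*(k:ℝ)+2) / pdel ε k⌋₊ : ℝ) ≤ (2*(k:ℝ)+2) / pdel ε k :=
    Nat.floor_le (by positivity)
  have h2 : (1:ℝ) ≤ 1 / pdel ε k := by rw [le_div_iff₀ hw0]; linarith
  have h3 : (2*(k:ℝ)+3) / pdel ε k = (2*(k:ℝ)+2) / pdel ε k + 1 / pdel ε k := by
    ring
  unfold pM
  push_cast
  linarith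

lemma key_real {h ε : ℝ} (hh : 0 < h) (hh1 : h ≤ 1) (hε : 0 < ε) (hε4 : ε ≤ 1/4) (k : ℕ) :
    (pN h ε k : ℝ) * ((pM ε k : ℝ) * pdel ε k ^ ((4:ℝ)/h)) ≤ ε/4 * (1/2)^k := by
  have hδ0 := pdel_pos hε k
  have hδ1 := pdel_le_one hε hε4 k
  have hw0 := pwid_pos (h := h) hε k
  have hK : (0:ℝ) ≤ (k:ℝ) := Nat.cast_nonneg k
  have hsplit : pdel ε k ^ ((4:ℝ)/h) = pdel ε k ^ ((3:ℝ)/h - 1) * (pwid h ε k * pdel ε k) := by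
    have hexp : (3:ℝ)/h - 1 + ((1:ℝ)/h + 1) = 4/h := by ring
    calc pdel ε k ^ ((4:ℝ)/h)
        = pdel ε k ^ ((3:ℝ)/h - 1 + ((1:ℝ)/h + 1)) := by rw [hexp]
      _ = pdel ε k ^ ((3:ℝ)/h - 1) * pdel ε k ^ ((1:ℝ)/h + 1) := Real.rpow_add hδ0 _ _
      _ = pdel ε k ^ ((3:ℝ)/h - 1) * (pdel ε k ^ ((1:ℝ)/h) * pdel ε k ^ (1:ℝ)) := by
          rw [Real.rpow_add hδ0]
      _ = pdel ε k ^ ((3:ℝ)/h - 1) * (pwid h ε k * pdel ε k) := by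
          rw [Real.rpow_one]; rfl
  have hE : pdel ε k ^ ((3:ℝ)/h - 1) ≤ pdel ε k ^ (2:ℝ) := by
    refine Real.rpow_le_rpow_of_exponent_ge hδ0 hδ1 ?_
    have : (3:ℝ) ≤ 3 / h := by rw [le_div_iff₀ hh]; linarith
    linarith
  have hP : (0:ℝ) ≤ pdel ε k ^ ((4:ℝ)/h) := Real.rpow_nonneg hδ0.le _
  have step1 : (pN h ε k : ℝ) * ((pM ε k : ℝ) * pdel ε k ^ ((4:ℝ)/h)) ≤
      ((2*(k:ℝ)+3) / pwid h ε k) * (((2*(k:ℝ)+3) / pdel ε k) * pdel ε k ^ ((4:ℝ)/h)) := by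
    have hN0 : (0:ℝ) ≤ (pN h ε k : ℝ) := Nat.cast_nonneg _
    have hM0 : (0:ℝ) ≤ (pM ε k : ℝ) := Nat.cast_nonneg _
    have := pN_le hh hε hε4 k
    have := pM_le hε hε4 k
    gcongr <;> assumption
  have step2 : ((2*(k:ℝ)+3) / pwid h ε k) * (((2*(k:ℝ)+3) / pdel ε k) * pdel ε k ^ ((4:ℝ)/h)) =
      (2*(k:ℝ)+3)^2 * pdel ε k ^ ((3:ℝ)/h - 1) := by
    rw [hsplit]
    field_simp
  have step3 : (2*(k:ℝ)+3)^2 * pdel ε k ^ ((3:ℝ)/h - 1) ≤ (2*(k:ℝ)+3)^2 * pdel ε k ^ (2:ℝ) :=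
    mul_le_mul_of_nonneg_left hE (by positivity)
  have hrw2 : pdel ε k ^ (2:ℝ) = pdel ε k ^ 2 := by
    rw [show (2:ℝ) = ((2:ℕ):ℝ) by norm_num, Real.rpow_natCast]
  have step4 : (2*(k:ℝ)+3)^2 * pdel ε k ^ (2:ℝ) ≤ ε/4 * (1/2)^k := by
    rw [hrw2]
    unfold pdel
    set q := ((1:ℝ)/2)^k with hq
    set D := (2*(k:ℝ)+3)^2 with hD
    have hq0 : 0 < q := by positivity
    have hq1 : q ≤ 1 := pow_le_one₀ (by norm_num) (by norm_num)
    have hD1 : (1:ℝ) ≤ D := by rw [hD]; nlinarith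
    have hD0 : (0:ℝ) < D := by positivity
    have hid : D * (ε * q / D)^2 = ε^2 * q^2 / D := by
      field_simp
    rw [hid]
    have h1 : ε^2 * q^2 / D ≤ ε^2 * q^2 := div_le_self (by positivity) hD1
    have hεq : ε * q ≤ 1/4 := by nlinarith
    nlinarith [mul_nonneg hε.le hq0.le]
  calc (pN h ε k : ℝ) * ((pM ε k : ℝ) * pdel ε k ^ ((4:ℝ)/h)) ≤ _ := step1
    _ = _ := step2
    _ ≤ _ := step3
    _ ≤ ε/4 * (1/2)^k := step4

lemma tsum_ite_lt (N : ℕ) (C : ℝ≥0∞) : ∑' i : ℕ, (if i < N then C else 0) = N * C := by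
  rw [tsum_eq_sum (s := Finset.range N)
    (fun b hb => by rw [if_neg (by simpa using fun hbN => hb (Finset.mem_range.mpr hbN))])]
  have hcongr : ∀ i ∈ Finset.range N, (if i < N then C else 0) = C := fun i hi =>
    if_pos (Finset.mem_range.mp hi)
  rw [Finset.sum_congr rfl hcongr, Finset.sum_const, Finset.card_range, nsmul_eq_mul]

lemma inner_sum_le {h ε : ℝ} (hh : 0 < h) (hh1 : h ≤ 1) (hε : 0 < ε) (hε4 : ε ≤ 1/4) (k : ℕ) :
    ∑' (i : ℕ), ∑' (j : ℕ), pDiam h (pV h ε k i j) ^ ((4:ℝ)/h) ≤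
      ENNReal.ofReal (ε/4 * (1/2)^k) := by
  set C := (ENNReal.ofReal (pdel ε k)) ^ ((4:ℝ)/h) with hC
  have hterm : ∀ i j, pDiam h (pV h ε k i j) ^ ((4:ℝ)/h) ≤
      if i < pN h ε k ∧ j < pM ε k then C else 0 := by
    intro i j
    by_cases hij : i < pN h ε k ∧ j < pM ε k
    · rw [if_pos hij]
      exact ENNReal.rpow_le_rpow (pV_diam hh hε k i j) (by positivity)
    · rw [if_neg hij]
      unfold pV
      rw [if_neg hij, pDiam_empty', ENNReal.zero_rpow_of_pos (by positivity)]
  calc ∑' (i : ℕ), ∑' (j : ℕ), pDiam h (pV h ε k i j) ^ ((4:ℝ)/h)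
      ≤ ∑' (i : ℕ), ∑' (j : ℕ), (if i < pN h ε k ∧ j < pM ε k then C else 0) :=
        ENNReal.tsum_le_tsum fun i => ENNReal.tsum_le_tsum (hterm i)
    _ = ∑' (i : ℕ), (if i < pN h ε k then (pM ε k : ℝ≥0∞) * C else 0) := by
        refine tsum_congr fun i => ?_
        by_cases hi : i < pN h ε k
        · rw [if_pos hi]
          calc ∑' (j : ℕ), (if i < pN h ε k ∧ j < pM ε k then C else 0)
              = ∑' (j : ℕ), (if j < pM ε k then C else 0) := by
                refine tsum_congr fun j => ?_
                by_cases hj : j < pM ε k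
                · rw [if_pos ⟨hi, hj⟩, if_pos hj]
                · rw [if_neg (fun hc => hj hc.2), if_neg hj]
            _ = (pM ε k : ℝ≥0∞) * C := tsum_ite_lt _ _
        · rw [if_neg hi]
          have : ∀ j : ℕ, (if i < pN h ε k ∧ j < pM ε k then C else 0) = 0 := fun j =>
            if_neg (fun hc => hi hc.1)
          simp [this]
    _ = (pN h ε k : ℝ≥0∞) * ((pM ε k : ℝ≥0∞) * C) := tsum_ite_lt _ _
    _ ≤ ENNReal.ofReal (ε/4 * (1/2)^k) := by
        have hCr : C = ENNReal.ofReal (pdel ε k ^ ((4:ℝ)/h)) := by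
          rw [hC, ENNReal.ofReal_rpow_of_pos (pdel_pos hε k)]
        rw [hCr, ← ENNReal.ofReal_natCast (pM ε k), ← ENNReal.ofReal_natCast (pN h ε k),
          ← ENNReal.ofReal_mul (by positivity), ← ENNReal.ofReal_mul (by positivity)]
        exact ENNReal.ofReal_le_ofReal (key_real hh hh1 hε hε4 k)

lemma pNull_exists {h : ℝ} (hh : 0 < h) (hh1 : h ≤ 1) (A : Set (ℝ × ℝ)) :
    ∃ s : ℝ, 0 < s ∧ pNull h s A := by
  refine ⟨4/h, by positivity, ?_⟩
  have key : ∀ ε : ℝ, 0 < ε → ε ≤ 1/4 → ∃ U : ℕ → Set (ℝ × ℝ),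
      (univ : Set (ℝ × ℝ)) ⊆ ⋃ n, U n ∧ (∀ n, pDiam h (U n) ≤ ENNReal.ofReal ε) ∧
      (∑' n, pDiam h (U n) ^ ((4:ℝ)/h)) < ENNReal.ofReal ε := by
    intro ε hε hε4
    set e : ℕ ≃ ℕ × ℕ × ℕ := (Denumerable.eqv (ℕ × ℕ × ℕ)).symm with he
    refine ⟨fun n => pV h ε (e n).1 (e n).2.1 (e n).2.2, ?_, ?_, ?_⟩
    · -- cover
      rintro ⟨u, x⟩ -
      set k := ⌊max |u| |x|⌋₊ with hk
      have hk1 : max |u| |x| < (k:ℝ) + 1 := Nat.lt_floor_add_one _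
      have hu : |u| < (k:ℝ)+1 := lt_of_le_of_lt (le_max_left _ _) hk1
      have hx : |x| < (k:ℝ)+1 := lt_of_le_of_lt (le_max_right _ _) hk1
      obtain ⟨hu1, hu2⟩ := abs_lt.mp hu
      obtain ⟨hx1, hx2⟩ := abs_lt.mp hx
      have hw0 : 0 < pwid h ε k := pwid_pos hε k
      have hδ0 : 0 < pdel ε k := pdel_pos hε k
      set i := ⌊(u + ((k:ℝ)+1)) / pwid h ε k⌋₊ with hi
      set j := ⌊(x + ((k:ℝ)+1)) / pdel ε k⌋₊ with hj
      have hunn : (0:ℝ) ≤ u + ((k:ℝ)+1) := by linarith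
      have hxnn : (0:ℝ) ≤ x + ((k:ℝ)+1) := by linarith
      have hil : (i:ℝ) * pwid h ε k ≤ u + ((k:ℝ)+1) :=
        (le_div_iff₀ hw0).mp (Nat.floor_le (by positivity))
      have hir : u + ((k:ℝ)+1) < ((i:ℝ)+1) * pwid h ε k := by
        have h0 := Nat.lt_floor_add_one ((u + ((k:ℝ)+1)) / pwid h ε k)
        rw [div_lt_iff₀ hw0] at h0
        rw [hi]
        exact_mod_cast h0
      have hjl : (j:ℝ) * pdel ε k ≤ x + ((k:ℝ)+1) :=
        (le_div_iff₀ hδ0).mp (Nat.floor_le (by positivity))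
      have hjr : x + ((k:ℝ)+1) < ((j:ℝ)+1) * pdel ε k := by
        have h0 := Nat.lt_floor_add_one ((x + ((k:ℝ)+1)) / pdel ε k)
        rw [div_lt_iff₀ hδ0] at h0
        rw [hj]
        exact_mod_cast h0
      have hiN : i < pN h ε k := by
        have hmono : (u + ((k:ℝ)+1)) / pwid h ε k ≤ (2*(k:ℝ)+2) / pwid h ε k :=
          (div_le_div_iff_of_pos_right hw0).mpr (by linarith)
        unfold pN
        exact Nat.lt_succ_of_le (Nat.floor_le_floor hmono)
      have hjM : j < pM ε k := by
        have hmono : (x + ((k:ℝ)+1)) / pdel ε k ≤ (2*(k:ℝ)+2) / pdel ε k :=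
          (div_le_div_iff_of_pos_right hδ0).mpr (by linarith)
        unfold pM
        exact Nat.lt_succ_of_le (Nat.floor_le_floor hmono)
      refine mem_iUnion.mpr ⟨e.symm (k, i, j), ?_⟩
      simp only [he, Equiv.apply_symm_apply]
      unfold pV
      rw [if_pos ⟨hiN, hjM⟩]
      refine ⟨Set.mem_Icc.mpr ⟨by linarith, by linarith⟩,
        Set.mem_Icc.mpr ⟨by linarith, by linarith⟩⟩
    · intro n
      exact (pV_diam hh hε _ _ _).trans (ENNReal.ofReal_le_ofReal (pdel_le hε _))
    · calc ∑' n, pDiam h (pV h ε (e n).1 (e n).2.1 (e n).2.2) ^ ((4:ℝ)/h)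
          = ∑' (p : ℕ × ℕ × ℕ), pDiam h (pV h ε p.1 p.2.1 p.2.2) ^ ((4:ℝ)/h) :=
            e.tsum_eq (fun p => pDiam h (pV h ε p.1 p.2.1 p.2.2) ^ ((4:ℝ)/h))
        _ = ∑' (k : ℕ), ∑' (q : ℕ × ℕ), pDiam h (pV h ε k q.1 q.2) ^ ((4:ℝ)/h) := by
            rw [ENNReal.tsum_prod']
        _ = ∑' (k : ℕ), ∑' (i : ℕ), ∑' (j : ℕ), pDiam h (pV h ε k i j) ^ ((4:ℝ)/h) := by
            refine tsum_congr fun k => ?_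
            rw [ENNReal.tsum_prod']
        _ ≤ ∑' (k : ℕ), ENNReal.ofReal (ε/4 * (1/2)^k) :=
            ENNReal.tsum_le_tsum fun k => inner_sum_le hh hh1 hε hε4 k
        _ = ENNReal.ofReal (ε/4) * ∑' (k : ℕ), (ENNReal.ofReal (1/2))^k := by
            rw [← ENNReal.tsum_mul_left]
            refine tsum_congr fun k => ?_
            rw [← ENNReal.ofReal_pow (by norm_num), ← ENNReal.ofReal_mul (by positivity)]
        _ = ENNReal.ofReal (ε/4) * 2 := by
            have h12 : ENNReal.ofReal (1/2:ℝ) = 2⁻¹ := by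
              rw [one_div, ENNReal.ofReal_inv_of_pos (by norm_num)]
              norm_num
            rw [h12, ENNReal.tsum_geometric, ENNReal.one_sub_inv_two, inv_inv]
        _ = ENNReal.ofReal (ε/2) := by
            rw [show (2:ℝ≥0∞) = ENNReal.ofReal 2 by norm_num,
              ← ENNReal.ofReal_mul (by positivity)]
            congr 1
            ring
        _ < ENNReal.ofReal ε := (ENNReal.ofReal_lt_ofReal_iff hε).mpr (by linarith)
  intro ε hε
  rcases le_or_gt ε (1/4) with hle | hlt
  · obtain ⟨U, hc, hd, hs⟩ := key ε hε hle
    exact ⟨U, (subset_univ A).trans hc, hd, hs⟩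
  · obtain ⟨U, hc, hd, hs⟩ := key (1/4) (by norm_num) le_rfl
    refine ⟨U, (subset_univ A).trans hc, fun n => (hd n).trans ?_, hs.trans_le ?_⟩
    · exact ENNReal.ofReal_le_ofReal hlt.le
    · exact ENNReal.ofReal_le_ofReal hlt.le

lemma pDimH_nonneg (h : ℝ) (A : Set (ℝ × ℝ)) : 0 ≤ pDimH h A :=
  Real.sInf_nonneg fun _ hx => hx.1

lemma pDimLoc_nonneg (H : ℝ → ℝ) (A : Set (ℝ × ℝ)) (t : ℝ) : 0 ≤ pDimLoc H A t := by
  refine Real.sInf_nonneg ?_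
  rintro x ⟨ρ, hρ, rfl⟩
  exact pDimH_nonneg _ _


/-- If `H : ℝ → (0,1]` is continuous, then the local parabolic Hausdorff dimension
`t ↦ lim_{ρ→0⁺} dimH(A ∩ ((t−ρ,t+ρ) × ℝ); ϱ_{H(t)})` is upper semi-continuous. -/
theorem stmt_5 (A : Set (ℝ × ℝ)) (H : ℝ → ℝ) (hH : Continuous H)
    (hrange : ∀ t, 0 < H t ∧ H t ≤ 1) :
    UpperSemicontinuous (pDimLoc H A) := by
  intro t y hy
  obtain ⟨hHt, hHt1⟩ := hrange t
  have hd0 : 0 ≤ pDimLoc H A t := pDimLoc_nonneg H A t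
  have hy0 : 0 < y := lt_of_le_of_lt hd0 hy
  set y' : ℝ := (pDimLoc H A t + y)/2 with hy'def
  have hy'1 : pDimLoc H A t < y' := by rw [hy'def]; linarith
  have hy'2 : y' < y := by rw [hy'def]; linarith
  have hy'0 : 0 < y' := by rw [hy'def]; linarith
  -- extract a small window `ρ` around `t` with `pDimH (H t) < y'`
  have hTne : {x : ℝ | ∃ ρ > (0:ℝ),
      x = pDimH (H t) (A ∩ (Ioo (t - ρ) (t + ρ) ×ˢ (univ : Set ℝ)))}.Nonempty :=
    ⟨_, ⟨1, one_pos, rfl⟩⟩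
  obtain ⟨xv, ⟨ρ, hρ, hxeq⟩, hxlt⟩ := exists_lt_of_csInf_lt hTne hy'1
  have hX'lt : pDimH (H t) (A ∩ (Ioo (t - ρ) (t + ρ) ×ˢ (univ : Set ℝ))) < y' := hxeq ▸ hxlt
  -- extract an exponent `s₀ < y'` that kills that window
  obtain ⟨s₂, hs₂pos, hs₂null⟩ :=
    pNull_exists hHt hHt1 (A ∩ (Ioo (t - ρ) (t + ρ) ×ˢ (univ : Set ℝ)))
  have hSne : {r : ℝ | 0 ≤ r ∧
      pNull (H t) r (A ∩ (Ioo (t - ρ) (t + ρ) ×ˢ (univ : Set ℝ)))}.Nonempty :=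
    ⟨s₂, hs₂pos.le, hs₂null⟩
  obtain ⟨s₀, ⟨hs₀0, hs₀null⟩, hs₀lt⟩ := exists_lt_of_csInf_lt hSne hX'lt
  have hs₀pos : 0 < s₀ := lt_of_le_of_ne hs₀0 (Ne.symm (pNull_ne_zero hs₀null))
  -- the neighborhood
  have hfraclt : y'/y < 1 := (div_lt_one hy0).mpr hy'2
  have hlt : H t * (y'/y) < H t := by
    nlinarith [hHt, hfraclt]
  have ev1 : ∀ᶠ s in 𝓝 t, s ∈ Ioo (t - ρ/2) (t + ρ/2) :=
    IsOpen.eventually_mem isOpen_Ioo (by constructor <;> linarith)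
  have ev2 : ∀ᶠ s in 𝓝 t, s ∈ {s : ℝ | H t * (y'/y) < H s} :=
    IsOpen.eventually_mem (isOpen_lt continuous_const hH) hlt
  filter_upwards [ev1, ev2] with s hs1 hs2
  obtain ⟨hs1a, hs1b⟩ := hs1
  obtain ⟨hHs, hHs1⟩ := hrange s
  have hs2' : H t * (y'/y) < H s := hs2
  -- the strip around `s` sits inside the strip around `t`
  have hsub : A ∩ (Ioo (s - ρ/2) (s + ρ/2) ×ˢ (univ : Set ℝ)) ⊆
      A ∩ (Ioo (t - ρ) (t + ρ) ×ˢ (univ : Set ℝ)) :=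
    inter_subset_inter_right A
      (prod_mono (Ioo_subset_Ioo (by linarith) (by linarith)) subset_rfl)
  have hnull' : pNull (H t) s₀ (A ∩ (Ioo (s - ρ/2) (s + ρ/2) ×ˢ (univ : Set ℝ))) :=
    pNull_mono_set hsub hs₀null
  have hnullX : pNull (H s) (s₀ * max (H t / H s) 1)
      (A ∩ (Ioo (s - ρ/2) (s + ρ/2) ×ˢ (univ : Set ℝ))) :=
    pNull_transfer hHt hHs hs₀pos hnull'
  -- bound the new exponent
  have hfrac : H t / H s ≤ y / y' := by
    rw [div_le_div_iff₀ hHs hy'0]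
    have h3 : H t * (y'/y) * y < H s * y := mul_lt_mul_of_pos_right hs2' hy0
    have h4 : H t * (y'/y) * y = H t * y' := by field_simp
    linarith
  have hc_le : max (H t / H s) 1 ≤ y / y' := max_le hfrac ((one_le_div hy'0).mpr hy'2.le)
  have hs₁lt : s₀ * max (H t / H s) 1 < y := by
    calc s₀ * max (H t / H s) 1 ≤ s₀ * (y / y') := mul_le_mul_of_nonneg_left hc_le hs₀0
      _ < y' * (y / y') := mul_lt_mul_of_pos_right hs₀lt (by positivity)
      _ = y := by field_simp
  -- conclude
  have hb1 : BddBelow {x : ℝ | ∃ ρ' > (0:ℝ),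
      x = pDimH (H s) (A ∩ (Ioo (s - ρ') (s + ρ') ×ˢ (univ : Set ℝ)))} := by
    refine ⟨0, ?_⟩
    rintro x ⟨ρ', _, rfl⟩
    exact pDimH_nonneg _ _
  have hb2 : BddBelow {r : ℝ | 0 ≤ r ∧
      pNull (H s) r (A ∩ (Ioo (s - ρ/2) (s + ρ/2) ×ˢ (univ : Set ℝ)))} :=
    ⟨0, fun r hr => hr.1⟩
  have hle1 : pDimLoc H A s ≤
      pDimH (H s) (A ∩ (Ioo (s - ρ/2) (s + ρ/2) ×ˢ (univ : Set ℝ))) :=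
    csInf_le hb1 ⟨ρ/2, by linarith, rfl⟩
  have hle2 : pDimH (H s) (A ∩ (Ioo (s - ρ/2) (s + ρ/2) ×ˢ (univ : Set ℝ))) ≤
      s₀ * max (H t / H s) 1 :=
    csInf_le hb2 ⟨by positivity, hnullX⟩
  exact lt_of_le_of_lt (hle1.trans hle2) hs₁lt
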